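/- Among 3×3 real matrices A with ‖A‖² = 3 and det A = 0, the wedge norm satisfies ‖A∧A‖² ≤ 9/4, with equality if and only if A is √(3/2) times a matrix that is orthogonal on a 2-plane and zero on its orthogonal complement (i.e., A has singular values √(3/2), √(3/2), 0). -/
import Mathlib

open Matrix

/-- The squared Frobenius norm of a 3×3 matrix. -/
def frobSq (A : Matrix (Fin 3) (Fin 3) ℝ) : ℝ := ∑ i, ∑ j, (A i j) ^ 2

/-- The squared wedge norm ‖A∧A‖²: the sum of the squares of all 2×2 minors of A. -/
def wedgeNormSq (A : Matrix (Fin 3) (Fin 3) ℝ) : ℝ :=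
  ∑ r, ∑ s, ((A.submatrix (Fin.succAbove r) (Fin.succAbove s)).det) ^ 2

namespace WedgeAux

lemma frobSq_eq_trace (A : Matrix (Fin 3) (Fin 3) ℝ) : frobSq A = trace (Aᵀ * A) := by
  simp [frobSq, trace, Matrix.mul_apply, Fin.sum_univ_three, diag]; ring

lemma wedge_eq_trace (A : Matrix (Fin 3) (Fin 3) ℝ) :
    wedgeNormSq A = ((trace (Aᵀ * A))^2 - trace ((Aᵀ * A) * (Aᵀ * A))) / 2 := by
  simp [wedgeNormSq, trace, Matrix.mul_apply, Fin.sum_univ_three, diag,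
    Matrix.det_fin_two, Fin.sum_univ_succ, Fin.succAbove]
  ring

lemma spectral_data (A : Matrix (Fin 3) (Fin 3) ℝ) :
    ∃ (U : Matrix (Fin 3) (Fin 3) ℝ) (μ : Fin 3 → ℝ), Uᵀ * U = 1 ∧
      Aᵀ * A = U * diagonal μ * Uᵀ ∧ (∀ i, 0 ≤ μ i) := by
  have hherm : (Aᵀ * A).IsHermitian := by
    have := Matrix.isHermitian_conjTranspose_mul_self A
    simpa using this
  have hpsd : (Aᵀ * A).PosSemidef := by
    have := Matrix.posSemidef_conjTranspose_mul_self A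
    simpa using this
  refine ⟨hherm.eigenvectorUnitary, hherm.eigenvalues, ?_, ?_, fun i => hpsd.eigenvalues_nonneg i⟩
  · simpa [star, Matrix.conjTranspose] using
      (Matrix.mem_unitaryGroup_iff'.mp hherm.eigenvectorUnitary.2)
  · have := hherm.spectral_theorem
    simpa [star, Function.comp] using this

lemma trace_conj (U M : Matrix (Fin 3) (Fin 3) ℝ) (hU : Uᵀ * U = 1) :
    trace (U * M * Uᵀ) = trace M := by
  rw [trace_mul_comm, ← Matrix.mul_assoc, hU, Matrix.one_mul]

noncomputable def sg : ℝ := Real.sqrt (3/2)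

lemma sg_sq : sg * sg = 3/2 := Real.mul_self_sqrt (by norm_num)
lemma sg_pos : 0 < sg := Real.sqrt_pos.mpr (by norm_num)

set_option maxHeartbeats 1600000 in
lemma construct_W (A V : Matrix (Fin 3) (Fin 3) ℝ) (hV : Vᵀ * V = 1)
    (hB : Aᵀ * A = V * diagonal ![(3:ℝ)/2, 3/2, 0] * Vᵀ) :
    ∃ W : Matrix (Fin 3) (Fin 3) ℝ, Wᵀ * W = 1 ∧
      A = W * Matrix.diagonal ![Real.sqrt (3/2), Real.sqrt (3/2), 0] * Vᵀ := by
  have hVV : V * Vᵀ = 1 := mul_eq_one_comm.mp hV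
  set C := A * V with hCdef
  have hC : Cᵀ * C = diagonal ![(3:ℝ)/2, 3/2, 0] := by
    have h1 : Cᵀ * C = Vᵀ * (Aᵀ * A) * V := by
      rw [hCdef, Matrix.transpose_mul]; noncomm_ring
    rw [h1, hB]
    calc Vᵀ * (V * diagonal ![(3:ℝ)/2, 3/2, 0] * Vᵀ) * V
        = (Vᵀ * V) * diagonal ![(3:ℝ)/2, 3/2, 0] * (Vᵀ * V) := by noncomm_ring
      _ = diagonal ![(3:ℝ)/2, 3/2, 0] := by rw [hV, Matrix.one_mul, Matrix.mul_one]
  have hdot : ∀ j k, C 0 j * C 0 k + C 1 j * C 1 k + C 2 j * C 2 k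
      = diagonal ![(3:ℝ)/2, 3/2, 0] j k := by
    intro j k
    have := congrFun (congrFun hC j) k
    simpa [Matrix.mul_apply, Fin.sum_univ_three] using this
  have h00 := hdot 0 0
  have h11 := hdot 1 1
  have h01 := hdot 0 1
  have h22 := hdot 2 2
  simp [Matrix.diagonal] at h00 h11 h01 h22
  have hz0 : C 0 2 = 0 := by
    nlinarith [sq_nonneg (C 0 2), sq_nonneg (C 1 2), sq_nonneg (C 2 2)]
  have hz1 : C 1 2 = 0 := by
    nlinarith [sq_nonneg (C 0 2), sq_nonneg (C 1 2), sq_nonneg (C 2 2)]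
  have hz2 : C 2 2 = 0 := by
    nlinarith [sq_nonneg (C 0 2), sq_nonneg (C 1 2), sq_nonneg (C 2 2)]
  set u : Fin 3 → ℝ := fun i => C i 0 / sg with hu
  set v : Fin 3 → ℝ := fun i => C i 1 / sg with hv
  have hsne : sg ≠ 0 := ne_of_gt sg_pos
  have hs2 : sg * sg = 3/2 := sg_sq
  have huu : u 0 * u 0 + u 1 * u 1 + u 2 * u 2 = 1 := by
    have h : u 0 * u 0 + u 1 * u 1 + u 2 * u 2
        = (C 0 0 * C 0 0 + C 1 0 * C 1 0 + C 2 0 * C 2 0) / (sg * sg) := by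
      simp only [hu]; field_simp
    rw [h, h00, hs2]; norm_num
  have hvv : v 0 * v 0 + v 1 * v 1 + v 2 * v 2 = 1 := by
    have h : v 0 * v 0 + v 1 * v 1 + v 2 * v 2
        = (C 0 1 * C 0 1 + C 1 1 * C 1 1 + C 2 1 * C 2 1) / (sg * sg) := by
      simp only [hv]; field_simp
    rw [h, h11, hs2]; norm_num
  have huv : u 0 * v 0 + u 1 * v 1 + u 2 * v 2 = 0 := by
    have h : u 0 * v 0 + u 1 * v 1 + u 2 * v 2
        = (C 0 0 * C 0 1 + C 1 0 * C 1 1 + C 2 0 * C 2 1) / (sg * sg) := by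
      simp only [hu, hv]; field_simp
    rw [h, h01]; simp
  set cr : Fin 3 → ℝ := ![u 1 * v 2 - u 2 * v 1, u 2 * v 0 - u 0 * v 2, u 0 * v 1 - u 1 * v 0]
    with hcr
  have hcr0 : cr 0 = u 1 * v 2 - u 2 * v 1 := rfl
  have hcr1 : cr 1 = u 2 * v 0 - u 0 * v 2 := rfl
  have hcr2 : cr 2 = u 0 * v 1 - u 1 * v 0 := rfl
  have hucr : u 0 * cr 0 + u 1 * cr 1 + u 2 * cr 2 = 0 := by
    rw [hcr0, hcr1, hcr2]; ring
  have hvcr : v 0 * cr 0 + v 1 * cr 1 + v 2 * cr 2 = 0 := by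
    rw [hcr0, hcr1, hcr2]; ring
  have hcrcr : cr 0 * cr 0 + cr 1 * cr 1 + cr 2 * cr 2 = 1 := by
    have key : cr 0 * cr 0 + cr 1 * cr 1 + cr 2 * cr 2
        = (u 0 * u 0 + u 1 * u 1 + u 2 * u 2) * (v 0 * v 0 + v 1 * v 1 + v 2 * v 2)
          - (u 0 * v 0 + u 1 * v 1 + u 2 * v 2) ^ 2 := by
      rw [hcr0, hcr1, hcr2]; ring
    rw [key, huu, hvv, huv]; norm_num
  set W : Matrix (Fin 3) (Fin 3) ℝ := Matrix.of (fun i => ![u i, v i, cr i]) with hW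
  refine ⟨W, ?_, ?_⟩
  · ext j k
    fin_cases j <;> fin_cases k <;>
      simp [Matrix.mul_apply, Fin.sum_univ_three, hW, Matrix.one_apply] <;>
      first
        | linear_combination huu
        | linear_combination hvv
        | linear_combination huv
        | linear_combination hucr
        | linear_combination hvcr
        | linear_combination hcrcr
  · have hAV : A * V = W * Matrix.diagonal ![Real.sqrt (3/2), Real.sqrt (3/2), 0] := by
      ext i j
      rw [Matrix.mul_diagonal]
      fin_cases j
      · show C i 0 = W i 0 * Real.sqrt (3/2)
        show C i 0 = C i 0 / sg * sg
        field_simp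
      · show C i 1 = W i 1 * Real.sqrt (3/2)
        show C i 1 = C i 1 / sg * sg
        field_simp
      · show C i 2 = W i 2 * 0
        rw [mul_zero]
        fin_cases i
        · exact hz0
        · exact hz1
        · exact hz2
    calc A = A * (V * Vᵀ) := by rw [hVV, Matrix.mul_one]
      _ = (A * V) * Vᵀ := by rw [Matrix.mul_assoc]
      _ = W * Matrix.diagonal ![Real.sqrt (3/2), Real.sqrt (3/2), 0] * Vᵀ := by rw [hAV]

/-- permutation matrix facts -/
lemma perm02_orth : (!![(0:ℝ),0,1;0,1,0;1,0,0])ᵀ * !![(0:ℝ),0,1;0,1,0;1,0,0] = 1 := by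
  ext i j
  fin_cases i <;> fin_cases j <;>
    simp [Matrix.mul_apply, Fin.sum_univ_three, Matrix.one_apply,
      Matrix.vecHead, Matrix.vecTail, Matrix.transpose_apply]

lemma perm12_orth : (!![(1:ℝ),0,0;0,0,1;0,1,0])ᵀ * !![(1:ℝ),0,0;0,0,1;0,1,0] = 1 := by
  ext i j
  fin_cases i <;> fin_cases j <;>
    simp [Matrix.mul_apply, Fin.sum_univ_three, Matrix.one_apply,
      Matrix.vecHead, Matrix.vecTail, Matrix.transpose_apply]

lemma perm02_diag : diagonal ![(0:ℝ), 3/2, 3/2]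
    = !![(0:ℝ),0,1;0,1,0;1,0,0] * diagonal ![(3:ℝ)/2, 3/2, 0] * (!![(0:ℝ),0,1;0,1,0;1,0,0])ᵀ := by
  ext i j
  fin_cases i <;> fin_cases j <;>
    simp [Matrix.mul_apply, Fin.sum_univ_three, Matrix.diagonal,
      Matrix.vecHead, Matrix.vecTail, Matrix.transpose_apply]

lemma perm12_diag : diagonal ![(3:ℝ)/2, 0, 3/2]
    = !![(1:ℝ),0,0;0,0,1;0,1,0] * diagonal ![(3:ℝ)/2, 3/2, 0] * (!![(1:ℝ),0,0;0,0,1;0,1,0])ᵀ := by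
  ext i j
  fin_cases i <;> fin_cases j <;>
    simp [Matrix.mul_apply, Fin.sum_univ_three, Matrix.diagonal,
      Matrix.vecHead, Matrix.vecTail, Matrix.transpose_apply]

/-- Reverse direction: a matrix of the given form has wedgeNormSq = 9/4. -/
lemma reverse_dir (W V : Matrix (Fin 3) (Fin 3) ℝ) (hW : Wᵀ * W = 1) (hV : Vᵀ * V = 1) :
    wedgeNormSq (W * Matrix.diagonal ![Real.sqrt (3/2), Real.sqrt (3/2), 0] * Vᵀ) = 9/4 := by
  set A := W * Matrix.diagonal ![Real.sqrt (3/2), Real.sqrt (3/2), 0] * Vᵀ with hA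
  have hss : Real.sqrt (3/2) * Real.sqrt (3/2) = 3/2 := Real.mul_self_sqrt (by norm_num)
  have hvec : (fun i => ![Real.sqrt (3/2), Real.sqrt (3/2), 0] i
      * ![Real.sqrt (3/2), Real.sqrt (3/2), 0] i) = ![(3:ℝ)/2, 3/2, 0] := by
    funext i
    fin_cases i
    · exact hss
    · exact hss
    · show (0:ℝ) * 0 = (0:ℝ); ring
  have hDD : (Matrix.diagonal ![Real.sqrt (3/2), Real.sqrt (3/2), 0]) *
      (Matrix.diagonal ![Real.sqrt (3/2), Real.sqrt (3/2), 0]) = diagonal ![(3:ℝ)/2, 3/2, 0] := by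
    rw [Matrix.diagonal_mul_diagonal, hvec]
  have hB : Aᵀ * A = V * diagonal ![(3:ℝ)/2, 3/2, 0] * Vᵀ := by
    rw [hA]
    rw [Matrix.transpose_mul, Matrix.transpose_mul, Matrix.transpose_transpose,
      Matrix.diagonal_transpose]
    calc Vᵀᵀ * (Matrix.diagonal ![Real.sqrt (3/2), Real.sqrt (3/2), 0] * Wᵀ)
          * (W * Matrix.diagonal ![Real.sqrt (3/2), Real.sqrt (3/2), 0] * Vᵀ)
        = V * (Matrix.diagonal ![Real.sqrt (3/2), Real.sqrt (3/2), 0] * (Wᵀ * W)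
          * Matrix.diagonal ![Real.sqrt (3/2), Real.sqrt (3/2), 0]) * Vᵀ := by
          rw [Matrix.transpose_transpose]; noncomm_ring
      _ = V * diagonal ![(3:ℝ)/2, 3/2, 0] * Vᵀ := by
          rw [hW, Matrix.mul_one, hDD]
  have hBB : (Aᵀ * A) * (Aᵀ * A) = V * diagonal (fun i => ![(3:ℝ)/2, 3/2, 0] i * ![(3:ℝ)/2, 3/2, 0] i) * Vᵀ := by
    rw [hB]
    calc V * diagonal ![(3:ℝ)/2, 3/2, 0] * Vᵀ * (V * diagonal ![(3:ℝ)/2, 3/2, 0] * Vᵀ)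
        = V * (diagonal ![(3:ℝ)/2, 3/2, 0] * (Vᵀ * V) * diagonal ![(3:ℝ)/2, 3/2, 0]) * Vᵀ := by
          noncomm_ring
      _ = _ := by rw [hV, Matrix.mul_one, Matrix.diagonal_mul_diagonal]
  rw [wedge_eq_trace, hBB, hB, trace_conj _ _ hV, trace_conj _ _ hV,
    Matrix.trace_diagonal, Matrix.trace_diagonal]
  simp [Fin.sum_univ_three]
  norm_num

end WedgeAux

set_option maxHeartbeats 2000000 in
open WedgeAux in
/-- Among 3×3 real matrices with ‖A‖² = 3 and det A = 0, the wedge norm satisfies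
‖A∧A‖² ≤ 9/4, with equality iff A has singular values √(3/2), √(3/2), 0, i.e.
A = W · diag(√(3/2), √(3/2), 0) · V⁻¹ for some orthogonal W, V — a matrix which is
√(3/2) times one that is orthogonal on a 2-plane and zero on its orthogonal complement. -/
theorem wedgeNorm_max_on_singular_sphere (A : Matrix (Fin 3) (Fin 3) ℝ)
    (hA : frobSq A = 3) (hdet : A.det = 0) :
    wedgeNormSq A ≤ 9 / 4 ∧
    (wedgeNormSq A = 9 / 4 ↔
      ∃ W V : Matrix (Fin 3) (Fin 3) ℝ, Wᵀ * W = 1 ∧ Vᵀ * V = 1 ∧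
        A = W * Matrix.diagonal ![Real.sqrt (3/2), Real.sqrt (3/2), 0] * Vᵀ) := by
  obtain ⟨U, μ, hU, hBspec, hnn⟩ := spectral_data A
  have hUU : U * Uᵀ = 1 := mul_eq_one_comm.mp hU
  have hsum : μ 0 + μ 1 + μ 2 = 3 := by
    have h1 : trace (Aᵀ * A) = μ 0 + μ 1 + μ 2 := by
      rw [hBspec, trace_conj _ _ hU, Matrix.trace_diagonal]
      simp [Fin.sum_univ_three]
    rw [← h1, ← frobSq_eq_trace, hA]
  have hBB : (Aᵀ * A) * (Aᵀ * A) = U * diagonal (fun i => μ i * μ i) * Uᵀ := by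
    rw [hBspec]
    calc U * diagonal μ * Uᵀ * (U * diagonal μ * Uᵀ)
        = U * (diagonal μ * (Uᵀ * U) * diagonal μ) * Uᵀ := by noncomm_ring
      _ = _ := by rw [hU, Matrix.mul_one, Matrix.diagonal_mul_diagonal]
  have hsumsq : trace ((Aᵀ * A) * (Aᵀ * A)) = μ 0 * μ 0 + μ 1 * μ 1 + μ 2 * μ 2 := by
    rw [hBB, trace_conj _ _ hU, Matrix.trace_diagonal]
    simp [Fin.sum_univ_three]
  have hwedge : wedgeNormSq A = (9 - (μ 0 * μ 0 + μ 1 * μ 1 + μ 2 * μ 2)) / 2 := by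
    rw [wedge_eq_trace, hsumsq]
    have h1 : trace (Aᵀ * A) = 3 := by rw [← frobSq_eq_trace, hA]
    rw [h1]; norm_num
  have hprod : μ 0 * (μ 1 * μ 2) = 0 := by
    have h1 : (Aᵀ * A).det = 0 := by
      rw [Matrix.det_mul, Matrix.det_transpose, hdet, mul_zero]
    have h2 : (Aᵀ * A).det = (U.det * Uᵀ.det) * (μ 0 * (μ 1 * μ 2)) := by
      rw [hBspec, Matrix.det_mul, Matrix.det_mul, Matrix.det_diagonal]
      simp [Fin.prod_univ_three]; ring
    have h3 : U.det * Uᵀ.det = 1 := by rw [← Matrix.det_mul, hUU, Matrix.det_one]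
    rw [h2, h3, one_mul] at h1
    exact h1
  have h0 := hnn 0
  have h1 := hnn 1
  have h2 := hnn 2
  constructor
  · -- inequality
    rw [hwedge]
    rcases mul_eq_zero.mp hprod with hz | hz
    · nlinarith [sq_nonneg (μ 1 - μ 2)]
    · rcases mul_eq_zero.mp hz with hz' | hz'
      · nlinarith [sq_nonneg (μ 0 - μ 2)]
      · nlinarith [sq_nonneg (μ 0 - μ 1)]
  constructor
  · -- equality → existence
    intro heq
    rw [hwedge] at heq
    have hkey : ∃ V : Matrix (Fin 3) (Fin 3) ℝ, Vᵀ * V = 1 ∧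
        Aᵀ * A = V * diagonal ![(3:ℝ)/2, 3/2, 0] * Vᵀ := by
      rcases mul_eq_zero.mp hprod with hz | hz
      · -- μ 0 = 0, so μ 1 = μ 2 = 3/2
        have e1 : μ 1 = 3/2 := by nlinarith [sq_nonneg (μ 1 - μ 2)]
        have e2 : μ 2 = 3/2 := by nlinarith [sq_nonneg (μ 1 - μ 2)]
        have hμ : μ = ![0, 3/2, 3/2] := by
          funext i; fin_cases i
          · exact hz
          · exact e1
          · exact e2
        refine ⟨U * !![(0:ℝ),0,1;0,1,0;1,0,0], ?_, ?_⟩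
        · rw [Matrix.transpose_mul]
          calc (!![(0:ℝ),0,1;0,1,0;1,0,0])ᵀ * Uᵀ * (U * !![(0:ℝ),0,1;0,1,0;1,0,0])
              = (!![(0:ℝ),0,1;0,1,0;1,0,0])ᵀ * (Uᵀ * U) * !![(0:ℝ),0,1;0,1,0;1,0,0] := by
                noncomm_ring
            _ = 1 := by rw [hU, Matrix.mul_one, perm02_orth]
        · rw [hBspec, hμ, perm02_diag, Matrix.transpose_mul]
          noncomm_ring
      · rcases mul_eq_zero.mp hz with hz' | hz'
        · -- μ 1 = 0
          have e1 : μ 0 = 3/2 := by nlinarith [sq_nonneg (μ 0 - μ 2)]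
          have e2 : μ 2 = 3/2 := by nlinarith [sq_nonneg (μ 0 - μ 2)]
          have hμ : μ = ![3/2, 0, 3/2] := by
            funext i; fin_cases i
            · exact e1
            · exact hz'
            · exact e2
          refine ⟨U * !![(1:ℝ),0,0;0,0,1;0,1,0], ?_, ?_⟩
          · rw [Matrix.transpose_mul]
            calc (!![(1:ℝ),0,0;0,0,1;0,1,0])ᵀ * Uᵀ * (U * !![(1:ℝ),0,0;0,0,1;0,1,0])
                = (!![(1:ℝ),0,0;0,0,1;0,1,0])ᵀ * (Uᵀ * U) * !![(1:ℝ),0,0;0,0,1;0,1,0] := by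
                  noncomm_ring
              _ = 1 := by rw [hU, Matrix.mul_one, perm12_orth]
          · rw [hBspec, hμ, perm12_diag, Matrix.transpose_mul]
            noncomm_ring
        · -- μ 2 = 0
          have e1 : μ 0 = 3/2 := by nlinarith [sq_nonneg (μ 0 - μ 1)]
          have e2 : μ 1 = 3/2 := by nlinarith [sq_nonneg (μ 0 - μ 1)]
          have hμ : μ = ![3/2, 3/2, 0] := by
            funext i; fin_cases i
            · exact e1
            · exact e2
            · exact hz'
          exact ⟨U, hU, by rw [hBspec, hμ]⟩
    obtain ⟨V, hV, hBV⟩ := hkey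
    obtain ⟨W, hW, hAW⟩ := construct_W A V hV hBV
    exact ⟨W, V, hW, hV, hAW⟩
  · -- existence → equality
    rintro ⟨W, V, hW, hV, hAeq⟩
    rw [hAeq]
    exact reverse_dir W V hW hV
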